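/- arXiv:2508.01377 — 4 statements merged into one kernel-verified Lean document; each statement's English description precedes it below -/
import Mathlib

section
/- For a nonnegative integrable function ρ on ℝ with finite moments C_0, ..., C_n (with x ↦ x^{n+1} ρ(x) also integrable), the Stieltjes transform G(z) = ∫ ρ(x)/(x-z) dx satisfies the asymptotic condition: lim_{t → ∞} (it)^{n+1} ( G(it) + Σ_{m=0}^{n-1} C_m / (it)^{m+1} ) = -C_n, where t ∈ ℝ, t → +∞. -/
open MeasureTheory Filter

/-- Integrability of `g x / (x - z)` for integrable `g` and `z` off the real axis. -/
lemma stieltjes_aux_int (g : ℝ → ℝ) (hg : Integrable g) (z : ℂ) (hz : z.im ≠ 0) :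
    Integrable (fun x : ℝ => (g x : ℂ) / ((x : ℂ) - z)) := by
  have hzabs : 0 < |z.im| := abs_pos.mpr hz
  have hmeas : AEStronglyMeasurable (fun x : ℝ => (g x : ℂ) / ((x : ℂ) - z)) volume := by
    have h1 : AEMeasurable (fun x : ℝ => (g x : ℂ)) volume :=
      Complex.measurable_ofReal.comp_aemeasurable hg.aemeasurable
    have h2 : Measurable (fun x : ℝ => (x : ℂ) - z) :=
      (Complex.measurable_ofReal.sub measurable_const)
    exact (h1.div h2.aemeasurable).aestronglyMeasurable
  apply Integrable.mono' (hg.norm.mul_const (1 / |z.im|)) hmeas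
  filter_upwards with x
  have hlow : |z.im| ≤ ‖(x : ℂ) - z‖ := by
    have := Complex.abs_im_le_norm ((x : ℂ) - z)
    simpa using this
  rw [norm_div, Complex.norm_real, mul_one_div]
  gcongr

/-- Pointwise algebraic identity. -/
lemma stieltjes_aux_ptwise (n : ℕ) (X z r : ℂ) (hxz : X - z ≠ 0) :
    z ^ (n + 1) * (r / (X - z)) + ∑ m ∈ Finset.range n, X ^ m * r * z ^ (n - m)
      = -(X ^ n * r) + X ^ (n + 1) * r / (X - z) := by
  have hgeom : (∑ m ∈ Finset.range n, X ^ m * z ^ (n - 1 - m)) * (X - z) = X ^ n - z ^ n :=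
    geom_sum₂_mul X z n
  have hsum : ∑ m ∈ Finset.range n, X ^ m * r * z ^ (n - m)
      = r * z * ∑ m ∈ Finset.range n, X ^ m * z ^ (n - 1 - m) := by
    rw [Finset.mul_sum]
    apply Finset.sum_congr rfl
    intro m hm
    have hm' : m < n := Finset.mem_range.mp hm
    have : n - m = (n - 1 - m) + 1 := by omega
    rw [this, pow_succ]
    ring
  rw [hsum]
  field_simp
  linear_combination r * z * hgeom

/-- asymptotic interpolation condition for the Stieltjes transform:
(it)^{n+1} (G(it) + Σ_{m<n} C_m/(it)^{m+1}) → -C_n as t → ∞. -/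
theorem stieltjes_asymptotic (n : ℕ) (ρ : ℝ → ℝ) (hpos : ∀ x, 0 ≤ ρ x)
    (hint : ∀ m ≤ n + 1, Integrable (fun x : ℝ => x ^ m * ρ x)) :
    Tendsto (fun t : ℝ =>
        (Complex.I * t) ^ (n + 1) *
          ((∫ x : ℝ, (ρ x : ℂ) / ((x : ℂ) - Complex.I * t)) +
            ∑ m ∈ Finset.range n,
              ((∫ x : ℝ, x ^ m * ρ x : ℝ) : ℂ) / (Complex.I * t) ^ (m + 1)))
      atTop (nhds (-((∫ x : ℝ, x ^ n * ρ x : ℝ) : ℂ))) := by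
  have hρ : Integrable ρ := by simpa using hint 0 (by omega)
  have hN : Integrable (fun x : ℝ => x ^ (n + 1) * ρ x) := hint (n + 1) le_rfl
  -- the remainder term
  set R : ℝ → ℂ := fun t => ∫ x : ℝ, (x : ℂ) ^ (n + 1) * (ρ x : ℂ) / ((x : ℂ) - Complex.I * t)
    with hR
  have key : ∀ t : ℝ, 0 < t →
      (Complex.I * t) ^ (n + 1) *
          ((∫ x : ℝ, (ρ x : ℂ) / ((x : ℂ) - Complex.I * t)) +
            ∑ m ∈ Finset.range n,
              ((∫ x : ℝ, x ^ m * ρ x : ℝ) : ℂ) / (Complex.I * t) ^ (m + 1))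
        = -((∫ x : ℝ, x ^ n * ρ x : ℝ) : ℂ) + R t := by
    intro t ht
    set z : ℂ := Complex.I * t with hzdef
    have hzim : z.im = t := by simp [hzdef]
    have hzim0 : z.im ≠ 0 := by rw [hzim]; exact ne_of_gt ht
    have hz0 : z ≠ 0 := fun h => hzim0 (by rw [h]; simp)
    have hne : ∀ x : ℝ, (x : ℂ) - z ≠ 0 := by
      intro x h
      have : ((x : ℂ) - z).im = 0 := by rw [h]; simp
      simp only [Complex.sub_im, Complex.ofReal_im, zero_sub, neg_eq_zero] at this
      exact hzim0 this
    -- integrability facts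
    have h1 : Integrable (fun x : ℝ => (ρ x : ℂ) / ((x : ℂ) - z)) :=
      stieltjes_aux_int ρ hρ z hzim0
    have h2 : Integrable (fun x : ℝ => (x : ℂ) ^ (n + 1) * (ρ x : ℂ) / ((x : ℂ) - z)) := by
      have := stieltjes_aux_int _ hN z hzim0
      apply this.congr
      filter_upwards with x
      push_cast
      ring
    have hsummand : ∀ m ∈ Finset.range n,
        Integrable (fun x : ℝ => ((x : ℂ)) ^ m * (ρ x : ℂ) * z ^ (n - m)) := by
      intro m hm
      have hm' : m < n := Finset.mem_range.mp hm
      have : Integrable (fun x : ℝ => ((x ^ m * ρ x : ℝ) : ℂ)) :=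
        (hint m (by omega)).ofReal
      apply (this.mul_const (z ^ (n - m))).congr
      filter_upwards with x
      push_cast
      ring
    have h3 : Integrable (fun x : ℝ => (x : ℂ) ^ n * (ρ x : ℂ)) := by
      have hre : Integrable (fun x : ℝ => ((x ^ n * ρ x : ℝ) : ℂ)) :=
        (hint n (by omega)).ofReal
      apply hre.congr
      filter_upwards with x
      push_cast
      ring
    have hneg : Integrable (fun x : ℝ => -((x : ℂ) ^ n * (ρ x : ℂ))) := h3.neg
    -- rewrite the sum part
    have hsum_eq : z ^ (n + 1) * (∑ m ∈ Finset.range n,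
          ((∫ x : ℝ, x ^ m * ρ x : ℝ) : ℂ) / z ^ (m + 1))
        = ∫ x : ℝ, ∑ m ∈ Finset.range n, (x : ℂ) ^ m * (ρ x : ℂ) * z ^ (n - m) := by
      rw [integral_finset_sum _ hsummand, Finset.mul_sum]
      apply Finset.sum_congr rfl
      intro m hm
      have hm' : m < n := Finset.mem_range.mp hm
      have hpow : z ^ (n + 1) = z ^ (m + 1) * z ^ (n - m) := by
        rw [← pow_add]; congr 1; omega
      have hC : ((∫ x : ℝ, x ^ m * ρ x : ℝ) : ℂ)
          = ∫ x : ℝ, ((x ^ m * ρ x : ℝ) : ℂ) := (integral_ofReal).symm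
      have hInt : (∫ x : ℝ, ((x ^ m * ρ x : ℝ) : ℂ))
          = ∫ x : ℝ, (x : ℂ) ^ m * (ρ x : ℂ) := by
        apply integral_congr_ae
        filter_upwards with x
        push_cast
        ring
      rw [integral_mul_const, hC, hInt, hpow]
      field_simp
    calc z ^ (n + 1) * ((∫ x : ℝ, (ρ x : ℂ) / ((x : ℂ) - z)) +
            ∑ m ∈ Finset.range n, ((∫ x : ℝ, x ^ m * ρ x : ℝ) : ℂ) / z ^ (m + 1))
        = (∫ x : ℝ, z ^ (n + 1) * ((ρ x : ℂ) / ((x : ℂ) - z))) +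
            ∫ x : ℝ, ∑ m ∈ Finset.range n, (x : ℂ) ^ m * (ρ x : ℂ) * z ^ (n - m) := by
          rw [mul_add, hsum_eq, ← integral_const_mul]
      _ = ∫ x : ℝ, (z ^ (n + 1) * ((ρ x : ℂ) / ((x : ℂ) - z)) +
            ∑ m ∈ Finset.range n, (x : ℂ) ^ m * (ρ x : ℂ) * z ^ (n - m)) := by
          rw [integral_add (h1.const_mul _) (integrable_finset_sum _ hsummand)]
      _ = ∫ x : ℝ, (-((x : ℂ) ^ n * (ρ x : ℂ)) +
            (x : ℂ) ^ (n + 1) * (ρ x : ℂ) / ((x : ℂ) - z)) := by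
          apply integral_congr_ae
          filter_upwards with x
          exact stieltjes_aux_ptwise n (x : ℂ) z (ρ x : ℂ) (hne x)
      _ = -((∫ x : ℝ, x ^ n * ρ x : ℝ) : ℂ) + R t := by
          rw [integral_add hneg h2, integral_neg]
          congr 2
          have hC : ((∫ x : ℝ, x ^ n * ρ x : ℝ) : ℂ)
              = ∫ x : ℝ, ((x ^ n * ρ x : ℝ) : ℂ) := (integral_ofReal).symm
          rw [hC]
          apply integral_congr_ae
          filter_upwards with x
          push_cast
          ring
  -- the remainder tends to zero
  have hR0 : Tendsto R atTop (nhds 0) := by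
    have hM : Tendsto (fun t : ℝ => (∫ x : ℝ, |x ^ (n + 1) * ρ x|) / t) atTop (nhds 0) :=
      tendsto_const_nhds.div_atTop tendsto_id
    apply squeeze_zero_norm' _ hM
    filter_upwards [eventually_gt_atTop (0 : ℝ)] with t ht
    set z : ℂ := Complex.I * t with hzdef
    have hzim : z.im = t := by simp [hzdef]
    have hzim0 : z.im ≠ 0 := by rw [hzim]; exact ne_of_gt ht
    have hbound : ∀ x : ℝ, ‖(x : ℂ) ^ (n + 1) * (ρ x : ℂ) / ((x : ℂ) - z)‖
        ≤ |x ^ (n + 1) * ρ x| / t := by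
      intro x
      have hlow : t ≤ ‖(x : ℂ) - z‖ := by
        have := Complex.abs_im_le_norm ((x : ℂ) - z)
        rw [Complex.sub_im, Complex.ofReal_im, hzim] at this
        simpa [abs_of_pos ht] using this
      rw [norm_div]
      have hnum : ‖(x : ℂ) ^ (n + 1) * (ρ x : ℂ)‖ = |x ^ (n + 1) * ρ x| := by
        rw [← Complex.ofReal_pow, ← Complex.ofReal_mul, Complex.norm_real, Real.norm_eq_abs]
      rw [hnum]
      gcongr
    calc ‖R t‖ ≤ ∫ x : ℝ, ‖(x : ℂ) ^ (n + 1) * (ρ x : ℂ) / ((x : ℂ) - z)‖ :=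
          norm_integral_le_integral_norm _
      _ ≤ ∫ x : ℝ, |x ^ (n + 1) * ρ x| / t := by
          apply integral_mono_of_nonneg
          · filter_upwards with x; exact norm_nonneg _
          · exact hN.abs.div_const t
          · filter_upwards with x; exact hbound x
      _ = (∫ x : ℝ, |x ^ (n + 1) * ρ x|) / t := by
          rw [integral_div]
  have := (tendsto_const_nhds.add hR0 :
    Tendsto (fun t : ℝ => -((∫ x : ℝ, x ^ n * ρ x : ℝ) : ℂ) + R t) atTop
      (nhds (-((∫ x : ℝ, x ^ n * ρ x : ℝ) : ℂ) + 0)))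
  rw [add_zero] at this
  apply this.congr'
  filter_upwards [eventually_gt_atTop (0 : ℝ)] with t ht
  exact (key t ht).symm
end

section
/- Projection of a Weyl matrix ball to a disk: Let A, B, C be n×n complex matrices and let l, r ∈ ℂⁿ. Define the Weyl matrix ball B(C; A, B) = { C + A X B : X an n×n matrix with ‖X‖ ≤ 1 } (operator norm). Then { lᴴ M r : M ∈ B(C; A, B) } equals the closed disk in ℂ with center lᴴ C r and radius ‖Aᴴ l‖ · ‖B r‖. -/
open ComplexOrder Matrix

/-- Operator norm of a matrix induced by the Euclidean norm. -/
noncomputable def opNorm {n : ℕ} (X : Matrix (Fin n) (Fin n) ℂ) : ℝ :=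
  ‖Matrix.toEuclideanCLM (𝕜 := ℂ) X‖

/-- Euclidean norm of a vector. -/
noncomputable def vecNorm {n : ℕ} (v : Fin n → ℂ) : ℝ :=
  Real.sqrt (∑ i, ‖v i‖ ^ 2)

lemma vecNorm_eq {n : ℕ} (v : Fin n → ℂ) :
    vecNorm v = ‖(WithLp.equiv 2 (Fin n → ℂ)).symm v‖ := by
  rw [EuclideanSpace.norm_eq]; rfl

/-- the projection of a Weyl matrix ball to ℂ via vectors l, r is
the closed disk with center lᴴ C r and radius ‖Aᴴ l‖ ‖B r‖. -/
theorem weyl_ball_projection (n : ℕ) (A B C : Matrix (Fin n) (Fin n) ℂ)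
    (l r : Fin n → ℂ) :
    {z : ℂ | ∃ X : Matrix (Fin n) (Fin n) ℂ, opNorm X ≤ 1 ∧
        z = star l ⬝ᵥ ((C + A * X * B) *ᵥ r)}
      = Metric.closedBall (star l ⬝ᵥ (C *ᵥ r))
          (vecNorm (Aᴴ *ᵥ l) * vecNorm (B *ᵥ r)) := by
  classical
  have key : ∀ (X : Matrix (Fin n) (Fin n) ℂ),
      star l ⬝ᵥ ((C + A * X * B) *ᵥ r)
        = star l ⬝ᵥ (C *ᵥ r) + star (Aᴴ *ᵥ l) ⬝ᵥ (X *ᵥ (B *ᵥ r)) := by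
    intro X
    rw [Matrix.add_mulVec, dotProduct_add]
    congr 1
    rw [star_mulVec, conjTranspose_conjTranspose, ← Matrix.dotProduct_mulVec,
      ← Matrix.mulVec_mulVec, ← Matrix.mulVec_mulVec]
  set u : Fin n → ℂ := Aᴴ *ᵥ l with hu
  set v : Fin n → ℂ := B *ᵥ r with hv
  set c : ℂ := star l ⬝ᵥ (C *ᵥ r) with hc
  set eu : EuclideanSpace ℂ (Fin n) := (WithLp.equiv 2 (Fin n → ℂ)).symm u with heu
  set ev : EuclideanSpace ℂ (Fin n) := (WithLp.equiv 2 (Fin n → ℂ)).symm v with hev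
  have hnu : vecNorm u = ‖eu‖ := vecNorm_eq u
  have hnv : vecNorm v = ‖ev‖ := vecNorm_eq v
  ext z
  simp only [Set.mem_setOf_eq, Metric.mem_closedBall, dist_eq_norm, hnu, hnv]
  constructor
  · rintro ⟨X, hX, rfl⟩
    rw [key X]
    have : c + star u ⬝ᵥ (X *ᵥ v) - c = star u ⬝ᵥ (X *ᵥ v) := by ring
    rw [this]
    set T := Matrix.toEuclideanCLM (n := Fin n) (𝕜 := ℂ) X with hT
    have h1 : star u ⬝ᵥ (X *ᵥ v) = (inner ℂ eu (T ev) : ℂ) := by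
      rw [hT, heu, hev, WithLp.equiv_symm_apply, Matrix.toEuclideanCLM_toLp,
        EuclideanSpace.inner_toLp_toLp, dotProduct_comm]
    rw [h1]
    calc ‖(inner ℂ eu (T ev) : ℂ)‖ ≤ ‖eu‖ * ‖T ev‖ := norm_inner_le_norm _ _
      _ ≤ ‖eu‖ * (‖T‖ * ‖ev‖) := by
          gcongr; exact T.le_opNorm ev
      _ ≤ ‖eu‖ * (1 * ‖ev‖) := by
          gcongr
          exact hX
      _ = ‖eu‖ * ‖ev‖ := by ring
  · intro hz
    rcases le_or_gt (‖eu‖ * ‖ev‖) 0 with hR | hR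
    · have hz0 : z = c := by
        have : ‖z - c‖ ≤ 0 := hz.trans hR
        have : ‖z - c‖ = 0 := le_antisymm this (norm_nonneg _)
        exact sub_eq_zero.mp (norm_eq_zero.mp this)
      refine ⟨0, ?_, ?_⟩
      · rw [opNorm, map_zero, norm_zero]; exact zero_le_one
      · rw [key 0, hz0]
        simp
    · have hupos : 0 < ‖eu‖ := by
        rcases (norm_nonneg eu).lt_or_eq with h | h
        · exact h
        · exfalso; rw [← h] at hR; simp at hR
      have hvpos : 0 < ‖ev‖ := by
        rcases (norm_nonneg ev).lt_or_eq with h | h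
        · exact h
        · exfalso; rw [← h] at hR; simp at hR
      set w : ℂ := z - c with hw
      set α : ℂ := w / (((‖eu‖ : ℂ))^2 * ((‖ev‖ : ℂ))^2) with hα
      set X : Matrix (Fin n) (Fin n) ℂ := α • Matrix.vecMulVec u (star v) with hX
      have hmul : ∀ y : Fin n → ℂ, X *ᵥ y = (α * (star v ⬝ᵥ y)) • u := by
        intro y
        funext i
        simp only [hX, Matrix.mulVec, dotProduct, Matrix.smul_apply,
          Matrix.vecMulVec_apply, Pi.smul_apply, smul_eq_mul, Pi.star_apply]
        rw [Finset.mul_sum, Finset.sum_mul]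
        exact Finset.sum_congr rfl fun j _ => by ring
      have hinner : ∀ a b : Fin n → ℂ,
          star a ⬝ᵥ b = (inner ℂ ((WithLp.equiv 2 (Fin n → ℂ)).symm a)
            ((WithLp.equiv 2 (Fin n → ℂ)).symm b) : ℂ) :=
        fun a b => by rw [dotProduct_comm]; exact (EuclideanSpace.inner_toLp_toLp a b).symm
      have hvv : star v ⬝ᵥ v = ((‖ev‖ : ℂ))^2 := by
        rw [hinner v v, ← hev, inner_self_eq_norm_sq_to_K]; norm_cast
      have huu : star u ⬝ᵥ u = ((‖eu‖ : ℂ))^2 := by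
        rw [hinner u u, ← heu, inner_self_eq_norm_sq_to_K]; norm_cast
      have hwle : ‖w‖ ≤ ‖eu‖ * ‖ev‖ := hz
      refine ⟨X, ?_, ?_⟩
      · -- opNorm X ≤ 1
        rw [opNorm]
        refine ContinuousLinearMap.opNorm_le_bound _ zero_le_one ?_
        intro y
        have hTy : Matrix.toEuclideanCLM (n := Fin n) (𝕜 := ℂ) X y
            = (α * (star v ⬝ᵥ (WithLp.equiv 2 (Fin n → ℂ) y))) • eu := by
          have : y = (WithLp.equiv 2 (Fin n → ℂ)).symm (WithLp.equiv 2 (Fin n → ℂ) y) := rfl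
          rw [this, WithLp.equiv_symm_apply, Matrix.toEuclideanCLM_toLp]
          rw [hmul]
          rfl
        rw [hTy, norm_smul]
        have hinner2 : star v ⬝ᵥ (WithLp.equiv 2 (Fin n → ℂ) y) = (inner ℂ ev y : ℂ) := by
          rw [hinner v (WithLp.equiv 2 (Fin n → ℂ) y)]
          rfl
        rw [hinner2, norm_mul]
        have hαn : ‖α‖ = ‖w‖ / (‖eu‖^2 * ‖ev‖^2) := by
          rw [hα, norm_div, norm_mul, norm_pow, norm_pow, Complex.norm_real,
            Complex.norm_real, Real.norm_eq_abs, Real.norm_eq_abs,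
            abs_of_pos hupos, abs_of_pos hvpos]
        rw [hαn]
        have hiy : ‖(inner ℂ ev y : ℂ)‖ ≤ ‖ev‖ * ‖y‖ := norm_inner_le_norm _ _
        calc ‖w‖ / (‖eu‖ ^ 2 * ‖ev‖ ^ 2) * ‖(inner ℂ ev y : ℂ)‖ * ‖eu‖
            ≤ ‖w‖ / (‖eu‖ ^ 2 * ‖ev‖ ^ 2) * (‖ev‖ * ‖y‖) * ‖eu‖ := by
              have hd : 0 ≤ ‖w‖ / (‖eu‖ ^ 2 * ‖ev‖ ^ 2) := by positivity
              gcongr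
          _ = ‖w‖ / (‖eu‖ * ‖ev‖) * ‖y‖ := by
              field_simp
          _ ≤ 1 * ‖y‖ := by
              gcongr
              rw [div_le_one (by positivity)]
              exact hwle
      · rw [key X, hmul v, dotProduct_smul, huu, hvv]
        have : α * ((‖ev‖:ℂ))^2 * ((‖eu‖:ℂ))^2 = w := by
          rw [hα]
          have h1 : ((‖eu‖:ℂ)) ≠ 0 := by
            simp only [ne_eq, Complex.ofReal_eq_zero]
            exact ne_of_gt hupos
          have h2 : ((‖ev‖:ℂ)) ≠ 0 := by
            simp only [ne_eq, Complex.ofReal_eq_zero]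
            exact ne_of_gt hvpos
          field_simp
        rw [smul_eq_mul, this, hw]
        ring
end

section
/- Saturation step in the Weyl ball theorem: Let R be an n×n positive definite Hermitian matrix, S, T Hermitian-compatible n×n matrices with SᴴR⁻¹S - T positive definite, and G an n×n matrix satisfying -GᴴRG + GᴴS + SᴴG - T ⪰ 0. Then there exists a contractive matrix X (‖X‖ ≤ 1) such that G = R⁻¹S + R^{-1/2} X (SᴴR⁻¹S - T)^{1/2}. -/
open ComplexOrder Matrix

set_option maxHeartbeats 1000000

/-- The square root of a positive semidefinite matrix, as `Matrix.PosSemidef.sqrt` was defined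
in Mathlib (Dec 2024); that definition has since been removed. -/
noncomputable def Matrix.PosSemidef.sqrt {m 𝕜 : Type*} [Fintype m] [DecidableEq m] [RCLike 𝕜]
    {A : Matrix m m 𝕜} (hA : A.PosSemidef) : Matrix m m 𝕜 :=
  hA.1.eigenvectorUnitary.1 * diagonal ((↑) ∘ (Real.sqrt ∘ hA.1.eigenvalues)) *
    (star hA.1.eigenvectorUnitary : Matrix m m 𝕜)

lemma Matrix.PosSemidef.posSemidef_sqrt {m 𝕜 : Type*} [Fintype m] [DecidableEq m] [RCLike 𝕜]
    {A : Matrix m m 𝕜} (hA : A.PosSemidef) : hA.sqrt.PosSemidef := by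
  unfold Matrix.PosSemidef.sqrt
  have hd : (diagonal ((↑) ∘ (Real.sqrt ∘ hA.1.eigenvalues)) : Matrix m m 𝕜).PosSemidef := by
    rw [posSemidef_diagonal_iff]
    intro i
    simp only [Function.comp_apply, RCLike.ofReal_nonneg]
    exact Real.sqrt_nonneg _
  have := hd.mul_mul_conjTranspose_same (hA.1.eigenvectorUnitary : Matrix m m 𝕜)
  simpa [Matrix.star_eq_conjTranspose] using this

lemma Matrix.PosSemidef.sqrt_mul_self {m 𝕜 : Type*} [Fintype m] [DecidableEq m] [RCLike 𝕜]
    {A : Matrix m m 𝕜} (hA : A.PosSemidef) : hA.sqrt * hA.sqrt = A := by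
  unfold Matrix.PosSemidef.sqrt
  conv_rhs => rw [hA.1.spectral_theorem]
  rw [Unitary.conjStarAlgAut_apply]
  have hu : (star hA.1.eigenvectorUnitary : Matrix m m 𝕜) * hA.1.eigenvectorUnitary.1 = 1 :=
    Unitary.coe_star_mul_self _
  simp only [Matrix.mul_assoc]
  rw [← Matrix.mul_assoc (star _ : Matrix m m 𝕜), hu, Matrix.one_mul,
    ← Matrix.mul_assoc (diagonal _), diagonal_mul_diagonal]
  congr 3
  funext i
  simp only [Function.comp_apply]
  rw [← RCLike.ofReal_mul, Real.mul_self_sqrt (hA.eigenvalues_nonneg i)]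

lemma opNorm_le_one_of_contractive {n : ℕ} (X : Matrix (Fin n) (Fin n) ℂ)
    (h : (1 - Xᴴ * X).PosSemidef) : opNorm X ≤ 1 := by
  unfold opNorm
  refine ContinuousLinearMap.opNorm_le_bound _ zero_le_one (fun x => ?_)
  rw [one_mul]
  set f := Matrix.toEuclideanCLM (𝕜 := ℂ) X with hf
  have hsq : ‖f x‖ ^ 2 ≤ ‖x‖ ^ 2 := by
    rw [← @inner_self_eq_norm_sq ℂ, ← @inner_self_eq_norm_sq ℂ]
    set v : Fin n → ℂ := WithLp.equiv _ _ x with hv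
    have h0 := h.re_dotProduct_nonneg v
    have hfx : WithLp.equiv 2 _ (f x) = X *ᵥ v := by
      rw [hf]
      exact Matrix.ofLp_toEuclideanCLM X x
    have h1 : (inner ℂ (f x) (f x) : ℂ) = dotProduct (star v) ((Xᴴ * X) *ᵥ v) := by
      rw [EuclideanSpace.inner_eq_star_dotProduct, dotProduct_comm,
        show (f x).ofLp = X *ᵥ v from hfx, star_mulVec, dotProduct_mulVec,
        dotProduct_mulVec, Matrix.vecMul_vecMul]
    have h2 : (inner ℂ x x : ℂ) = dotProduct (star v) v :=
      (EuclideanSpace.inner_eq_star_dotProduct x x).trans (dotProduct_comm _ _)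
    rw [h1, h2]
    rw [sub_mulVec, dotProduct_sub, map_sub, Matrix.one_mulVec] at h0
    linarith
  nlinarith [norm_nonneg (f x), norm_nonneg x]

/-- saturation step of the Weyl ball theorem: if
-GᴴRG + GᴴS + SᴴG - T ⪰ 0 with R ≻ 0 and SᴴR⁻¹S - T ≻ 0, then
G = R⁻¹S + R^{-1/2} X (SᴴR⁻¹S - T)^{1/2} for some contraction X. -/
theorem weyl_ball_saturation (n : ℕ) (R S T G : Matrix (Fin n) (Fin n) ℂ)
    (hR : R.PosDef) (hT : T.IsHermitian)
    (hD : (Sᴴ * R⁻¹ * S - T).PosDef)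
    (hG : (-(Gᴴ * R * G) + Gᴴ * S + Sᴴ * G - T).PosSemidef) :
    ∃ X : Matrix (Fin n) (Fin n) ℂ, opNorm X ≤ 1 ∧
      G = R⁻¹ * S + (hR.posSemidef.sqrt)⁻¹ * X * hD.posSemidef.sqrt := by
  classical
  set Rs := hR.posSemidef.sqrt with hRs
  set Ds := hD.posSemidef.sqrt with hDs
  have hRsH : Rsᴴ = Rs := hR.posSemidef.posSemidef_sqrt.isHermitian
  have hDsH : Dsᴴ = Ds := hD.posSemidef.posSemidef_sqrt.isHermitian
  have hRs2 : Rs * Rs = R := hR.posSemidef.sqrt_mul_self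
  have hDs2 : Ds * Ds = Sᴴ * R⁻¹ * S - T := hD.posSemidef.sqrt_mul_self
  have hRdet : IsUnit R.det := hR.det_pos.ne'.isUnit
  have hRsdet : IsUnit Rs.det := by
    have h : Rs.det * Rs.det = R.det := by rw [← Matrix.det_mul, hRs2]
    exact isUnit_of_mul_isUnit_left (h ▸ hRdet)
  have hDdet : IsUnit (Sᴴ * R⁻¹ * S - T).det := hD.det_pos.ne'.isUnit
  have hDsdet : IsUnit Ds.det := by
    have h : Ds.det * Ds.det = (Sᴴ * R⁻¹ * S - T).det := by rw [← Matrix.det_mul, hDs2]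
    exact isUnit_of_mul_isUnit_left (h ▸ hDdet)
  have hRinvH : (R⁻¹)ᴴ = R⁻¹ := by
    rw [Matrix.conjTranspose_nonsing_inv, hR.isHermitian.eq]
  set W := G - R⁻¹ * S with hW
  set X := Rs * W * Ds⁻¹ with hX
  have hRRinv : R * R⁻¹ = 1 := Matrix.mul_nonsing_inv R hRdet
  have hRinvR : R⁻¹ * R = 1 := Matrix.nonsing_inv_mul R hRdet
  have hDsDsinv : Ds * Ds⁻¹ = 1 := Matrix.mul_nonsing_inv Ds hDsdet
  have hDsinvDs : Ds⁻¹ * Ds = 1 := Matrix.nonsing_inv_mul Ds hDsdet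
  have hRsinv : Rs⁻¹ * Rs = 1 := Matrix.nonsing_inv_mul Rs hRsdet
  have hDsinvH : (Ds⁻¹)ᴴ = Ds⁻¹ := by
    rw [Matrix.conjTranspose_nonsing_inv, hDsH]
  -- key algebraic identity
  have hkey : Ds * Ds - Wᴴ * R * W = -(Gᴴ * R * G) + Gᴴ * S + Sᴴ * G - T := by
    rw [hDs2, hW]
    have h1 : (G - R⁻¹ * S)ᴴ = Gᴴ - Sᴴ * R⁻¹ := by
      rw [conjTranspose_sub, conjTranspose_mul, hRinvH]
    rw [h1]
    have e1 : Gᴴ * R * (R⁻¹ * S) = Gᴴ * S := by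
      rw [Matrix.mul_assoc (Gᴴ) R, ← Matrix.mul_assoc R, hRRinv, Matrix.one_mul]
    have e2 : Sᴴ * R⁻¹ * R = Sᴴ := by
      rw [Matrix.mul_assoc, hRinvR, Matrix.mul_one]
    rw [Matrix.sub_mul, e2, Matrix.sub_mul, Matrix.mul_sub, Matrix.mul_sub, e1,
      ← Matrix.mul_assoc Sᴴ R⁻¹ S]
    abel
  have hPSD : (Ds * Ds - Wᴴ * R * W).PosSemidef := hkey ▸ hG
  have e : 1 - Xᴴ * X = (Ds⁻¹)ᴴ * (Ds * Ds - Wᴴ * R * W) * Ds⁻¹ := by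
    rw [hDsinvH, Matrix.mul_sub, Matrix.sub_mul]
    refine congrArg₂ (· - ·) ?_ ?_
    · rw [← Matrix.mul_assoc, hDsinvDs, Matrix.one_mul, hDsDsinv]
    · rw [hX, conjTranspose_mul, conjTranspose_mul, hDsinvH, hRsH, ← hRs2]
      simp only [Matrix.mul_assoc]
  have hcontr : (1 - Xᴴ * X).PosSemidef := e ▸ hPSD.conjTranspose_mul_mul_same Ds⁻¹
  refine ⟨X, opNorm_le_one_of_contractive X hcontr, ?_⟩
  rw [hX, Matrix.mul_assoc, Matrix.mul_assoc, hDsinvDs, Matrix.mul_one,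
    ← Matrix.mul_assoc, hRsinv, Matrix.one_mul, hW]
  abel
end

section
/- Fundamental lemma on block matrices: a Hermitian block matrix [[A, B],[Bᴴ, C]] (A, C square Hermitian) is positive semidefinite if and only if: A ⪰ 0, there exists X with A X = B, and C - Xᴴ A X ⪰ 0 for such X; moreover Xᴴ A X is independent of the choice of solution X of A X = B. -/
open ComplexOrder Matrix

lemma fbl_indep {n m : ℕ} {A : Matrix (Fin n) (Fin n) ℂ} {B X Y : Matrix (Fin n) (Fin m) ℂ}
    (hA : A.IsHermitian) (hX : A * X = B) (hY : A * Y = B) :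
    Xᴴ * A * X = Yᴴ * A * Y := by
  have hXA : Xᴴ * A = Bᴴ := by rw [← hX, conjTranspose_mul, hA.eq]
  have hYA : Yᴴ * A = Bᴴ := by rw [← hY, conjTranspose_mul, hA.eq]
  calc Xᴴ * A * X = Bᴴ * X := by rw [hXA]
    _ = Yᴴ * A * X := by rw [hYA]
    _ = Yᴴ * B := by rw [Matrix.mul_assoc, hX]
    _ = Yᴴ * (A * Y) := by rw [hY]
    _ = Yᴴ * A * Y := by rw [Matrix.mul_assoc]

lemma fbl_blockdiag {n m : ℕ} {A : Matrix (Fin n) (Fin n) ℂ} {D : Matrix (Fin m) (Fin m) ℂ}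
    (hA : A.PosSemidef) (hD : D.PosSemidef) :
    (Matrix.fromBlocks A 0 0 D).PosSemidef := by
  refine Matrix.PosSemidef.of_dotProduct_mulVec_nonneg ?_ ?_
  · unfold Matrix.IsHermitian
    rw [fromBlocks_conjTranspose]
    simp [hA.1.eq, hD.1.eq]
  · intro x
    have hx : x = Sum.elim (fun i => x (Sum.inl i)) (fun j => x (Sum.inr j)) := by
      funext i; cases i <;> rfl
    set u := fun i => x (Sum.inl i)
    set v := fun j => x (Sum.inr j)
    have hstar : star (Sum.elim u v) = Sum.elim (star u) (star v) := by
      funext i; cases i <;> rfl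
    rw [hx, fromBlocks_mulVec, hstar]
    simp only [Matrix.zero_mulVec, add_zero, zero_add]
    rw [sumElim_dotProduct_sumElim]
    exact add_nonneg (hA.dotProduct_mulVec_nonneg u) (hD.dotProduct_mulVec_nonneg v)

-- extract blocks via conjugation L^H M L with L = fromRows P Q
lemma fbl_conj {n m k : ℕ} {A : Matrix (Fin n) (Fin n) ℂ} {B : Matrix (Fin n) (Fin m) ℂ}
    {C : Matrix (Fin m) (Fin m) ℂ}
    (hM : (Matrix.fromBlocks A B Bᴴ C).PosSemidef)
    (P : Matrix (Fin n) (Fin k) ℂ) (Q : Matrix (Fin m) (Fin k) ℂ) :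
    (Pᴴ * (A * P + B * Q) + Qᴴ * (Bᴴ * P + C * Q)).PosSemidef := by
  have h := hM.conjTranspose_mul_mul_same (fromRows P Q)
  rwa [conjTranspose_fromRows_eq_fromCols_conjTranspose, Matrix.mul_assoc,
    fromBlocks_mul_fromRows, fromCols_mul_fromRows] at h

lemma fbl_A_psd {n m : ℕ} {A : Matrix (Fin n) (Fin n) ℂ} {B : Matrix (Fin n) (Fin m) ℂ}
    {C : Matrix (Fin m) (Fin m) ℂ}
    (hM : (Matrix.fromBlocks A B Bᴴ C).PosSemidef) : A.PosSemidef := by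
  have h := fbl_conj hM (1 : Matrix (Fin n) (Fin n) ℂ) (0 : Matrix (Fin m) (Fin n) ℂ)
  simpa using h

lemma fbl_C_psd {n m : ℕ} {A : Matrix (Fin n) (Fin n) ℂ} {B : Matrix (Fin n) (Fin m) ℂ}
    {C : Matrix (Fin m) (Fin m) ℂ}
    (hM : (Matrix.fromBlocks A B Bᴴ C).PosSemidef) : C.PosSemidef := by
  have h := fbl_conj hM (0 : Matrix (Fin n) (Fin m) ℂ) (1 : Matrix (Fin m) (Fin m) ℂ)
  simpa using h

lemma fbl_schur {n m : ℕ} {A : Matrix (Fin n) (Fin n) ℂ} {B X : Matrix (Fin n) (Fin m) ℂ}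
    {C : Matrix (Fin m) (Fin m) ℂ} (hA : A.IsHermitian)
    (hM : (Matrix.fromBlocks A B Bᴴ C).PosSemidef) (hX : A * X = B) :
    (C - Xᴴ * A * X).PosSemidef := by
  have h := fbl_conj hM (-X) (1 : Matrix (Fin m) (Fin m) ℂ)
  have hBX : Bᴴ * X = Xᴴ * A * X := by
    rw [← hX, conjTranspose_mul, hA.eq]
  simp only [Matrix.mul_neg, hX, neg_add_cancel, Matrix.mul_zero, Matrix.mul_one,
    Matrix.one_mul, zero_add, Matrix.mul_add, hBX] at h
  have e : -((1 : Matrix (Fin m) (Fin m) ℂ)ᴴ * (Xᴴ * A * X)) + (1 : Matrix (Fin m) (Fin m) ℂ)ᴴ * C = C - Xᴴ * A * X := by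
    simp [sub_eq_neg_add]
  rwa [e] at h

lemma fbl_ker {n m : ℕ} {A : Matrix (Fin n) (Fin n) ℂ} {B : Matrix (Fin n) (Fin m) ℂ}
    {C : Matrix (Fin m) (Fin m) ℂ} (hC : C.PosSemidef)
    (hM : (Matrix.fromBlocks A B Bᴴ C).PosSemidef)
    (v : Fin n → ℂ) (hv : A *ᵥ v = 0) : Bᴴ *ᵥ v = 0 := by
  by_contra hu
  set u : Fin m → ℂ := Bᴴ *ᵥ v with hudef
  set a : ℂ := star u ⬝ᵥ u with hadef
  set c : ℂ := star u ⬝ᵥ (C *ᵥ u) with hcdef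
  have ha : 0 < a := Matrix.dotProduct_star_self_pos_iff.mpr hu
  have hc : 0 ≤ c := hC.dotProduct_mulVec_nonneg u
  have hare : 0 < a.re := (Complex.lt_def.mp ha).1
  have haim : a.im = 0 := ((Complex.lt_def.mp ha).2).symm
  have hcre : 0 ≤ c.re := (Complex.le_def.mp hc).1
  have hcim : c.im = 0 := ((Complex.le_def.mp hc).2).symm
  set s : ℝ := a.re / (c.re + 1) with hsdef
  have hs : 0 < s := div_pos hare (by linarith)
  -- the test vector
  set w : Fin m → ℂ := (-(s : ℂ)) • u with hwdef
  have key := hM.dotProduct_mulVec_nonneg (Sum.elim v w)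
  have hstar : star (Sum.elim v w) = Sum.elim (star v) (star w) := by
    funext i; cases i <;> rfl
  rw [fromBlocks_mulVec, hstar, sumElim_dotProduct_sumElim] at key
  simp only [Sum.elim_comp_inl, Sum.elim_comp_inr] at key
  -- compute the pieces
  have hBu : star v ⬝ᵥ (B *ᵥ u) = a := by
    rw [dotProduct_mulVec, hadef]
    congr 1
    have := Matrix.star_mulVec (M := Bᴴ) (v := v)
    rw [conjTranspose_conjTranspose] at this
    exact this.symm
  have hsw : star w = (-(s:ℂ)) • star u := by
    rw [hwdef, star_smul]
    congr 1
    simp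
  have e1 : star v ⬝ᵥ (A *ᵥ v + B *ᵥ w) = (-(s:ℂ)) * a := by
    rw [hv, zero_add, hwdef, Matrix.mulVec_smul, dotProduct_smul, smul_eq_mul, hBu]
  have e2 : star w ⬝ᵥ (Bᴴ *ᵥ v + C *ᵥ w) = (-(s:ℂ)) * a + (s:ℂ)^2 * c := by
    rw [hsw, hwdef, Matrix.mulVec_smul]
    simp only [smul_dotProduct, dotProduct_add, dotProduct_smul, smul_eq_mul, ← hudef, ← hadef,
      ← hcdef]
    ring
  rw [e1, e2] at key
  have key' : (0:ℝ) ≤ ((-(s:ℂ)) * a + ((-(s:ℂ)) * a + (s:ℂ)^2 * c)).re :=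
    (Complex.le_def.mp key).1
  have hre : ((-(s:ℂ)) * a + ((-(s:ℂ)) * a + (s:ℂ)^2 * c)).re = -s * a.re + (-s * a.re + s^2 * c.re) := by
    simp [haim, hcim, Complex.mul_re, Complex.ofReal_re, pow_two]
  rw [hre] at key'
  have h1 : s * (c.re + 1) = a.re := by
    rw [hsdef]; field_simp
  nlinarith [mul_pos hs hs, mul_nonneg (mul_nonneg hs.le hs.le) hcre, mul_pos hs hare]

-- lift the kernel property to matrices
lemma fbl_ker_mat {n m k : ℕ} {A : Matrix (Fin n) (Fin n) ℂ} {B : Matrix (Fin n) (Fin m) ℂ}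
    (key : ∀ v : Fin n → ℂ, A *ᵥ v = 0 → Bᴴ *ᵥ v = 0)
    (N : Matrix (Fin n) (Fin k) ℂ) (hN : A * N = 0) : Bᴴ * N = 0 := by
  ext i j
  have hcol : A *ᵥ (fun t => N t j) = 0 := by
    funext i'
    have := congrFun (congrFun hN i') j
    simpa [Matrix.mul_apply, Matrix.mulVec, dotProduct] using this
  have := congrFun (key _ hcol) i
  simpa [Matrix.mul_apply, Matrix.mulVec, dotProduct] using this

-- existence of a solution X of A X = B
lemma fbl_exists {n m : ℕ} {A : Matrix (Fin n) (Fin n) ℂ} {B : Matrix (Fin n) (Fin m) ℂ}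
    (hA : A.IsHermitian)
    (key : ∀ v : Fin n → ℂ, A *ᵥ v = 0 → Bᴴ *ᵥ v = 0) :
    ∃ X : Matrix (Fin n) (Fin m) ℂ, A * X = B := by
  set U : Matrix (Fin n) (Fin n) ℂ := (hA.eigenvectorUnitary : Matrix (Fin n) (Fin n) ℂ) with hU
  set d : Fin n → ℝ := hA.eigenvalues with hd
  have hU1 : star U * U = 1 := Matrix.mem_unitaryGroup_iff'.mp (hA.eigenvectorUnitary).2
  have hspec : A = U * diagonal (RCLike.ofReal ∘ d) * star U := hA.spectral_theorem
  set F : (Fin n → ℂ) → Matrix (Fin n) (Fin n) ℂ := fun e => U * diagonal e * star U with hF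
  have cancel : ∀ e₁ e₂ : Fin n → ℂ, F e₁ * F e₂ = F (e₁ * e₂) := by
    intro e₁ e₂
    have hstep : F e₁ * F e₂ = U * (diagonal e₁ * ((star U * U) * (diagonal e₂ * star U))) := by
      simp only [hF, Matrix.mul_assoc]
    have hdd : diagonal e₁ * diagonal e₂ = diagonal (e₁ * e₂) := by
      rw [diagonal_mul_diagonal]; rfl
    rw [hstep, hU1, Matrix.one_mul, hF]
    show U * (diagonal e₁ * (diagonal e₂ * star U)) = U * diagonal (e₁ * e₂) * star U
    rw [← hdd]
    simp only [Matrix.mul_assoc]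
  set g : Fin n → ℂ := fun i => if d i = 0 then 0 else ((d i)⁻¹ : ℝ) with hg
  set Ap : Matrix (Fin n) (Fin n) ℂ := F g with hAp
  have hAF : A = F (RCLike.ofReal ∘ d) := hspec
  have h1 : A * Ap * A = A := by
    rw [hAF, hAp, cancel, cancel]
    have harg : ((RCLike.ofReal ∘ d) * g) * (RCLike.ofReal ∘ d) = (RCLike.ofReal ∘ d : Fin n → ℂ) := by
      funext i
      by_cases h : d i = 0 <;>
        · simp only [Pi.mul_apply, Function.comp_apply, hg]
          simp [h]
          try field_simp
    rw [harg]
  set P : Matrix (Fin n) (Fin n) ℂ := A * Ap with hP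
  have h2 : Pᴴ = P := by
    rw [hP, hAF, hAp, cancel, hF]
    simp only [conjTranspose_mul, diagonal_conjTranspose, star_star,
      Matrix.star_eq_conjTranspose, conjTranspose_conjTranspose]
    rw [← Matrix.mul_assoc]
    have harg : star ((RCLike.ofReal ∘ d) * g) = ((RCLike.ofReal ∘ d) * g : Fin n → ℂ) := by
      funext i
      by_cases h : d i = 0 <;>
        simp [hg, h, Pi.star_apply, Pi.mul_apply, Function.comp, Complex.star_def,
          Complex.conj_ofReal]
    rw [harg]
  have hPA : P * A = A := h1
  have hAP : A * (1 - P) = 0 := by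
    have h3 : (1 - P) * A = 0 := by rw [Matrix.sub_mul, Matrix.one_mul, hPA, sub_self]
    calc A * (1 - P) = (((1 - P)ᴴ) * Aᴴ)ᴴ := by
          rw [← conjTranspose_mul, conjTranspose_conjTranspose]
      _ = ((1 - P) * A)ᴴ := by rw [conjTranspose_sub, conjTranspose_one, h2, hA.eq]
      _ = 0 := by rw [h3, conjTranspose_zero]
  have h4 : Bᴴ * (1 - P) = 0 := fbl_ker_mat key _ hAP
  have h5 : (1 - P) * B = 0 := by
    have := congrArg conjTranspose h4
    rwa [conjTranspose_mul, conjTranspose_conjTranspose, conjTranspose_sub,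
      conjTranspose_one, h2, conjTranspose_zero] at this
  refine ⟨Ap * B, ?_⟩
  rw [← Matrix.mul_assoc, ← hP]
  rw [Matrix.sub_mul, Matrix.one_mul, sub_eq_zero] at h5
  exact h5.symm

/-- fundamental lemma on block matrices: [[A, B],[Bᴴ, C]] ⪰ 0 iff
A ⪰ 0, A X = B is solvable, and C - Xᴴ A X ⪰ 0 for every solution X; moreover
Xᴴ A X does not depend on the choice of solution X. -/
theorem fundamental_block_lemma (n m : ℕ) (A : Matrix (Fin n) (Fin n) ℂ)
    (B : Matrix (Fin n) (Fin m) ℂ) (C : Matrix (Fin m) (Fin m) ℂ)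
    (hA : A.IsHermitian) (hC : C.IsHermitian) :
    ((Matrix.fromBlocks A B Bᴴ C).PosSemidef ↔
      (A.PosSemidef ∧ (∃ X : Matrix (Fin n) (Fin m) ℂ, A * X = B) ∧
        ∀ X : Matrix (Fin n) (Fin m) ℂ, A * X = B → (C - Xᴴ * A * X).PosSemidef)) ∧
    (∀ X Y : Matrix (Fin n) (Fin m) ℂ, A * X = B → A * Y = B →
      Xᴴ * A * X = Yᴴ * A * Y) := by
  constructor
  · constructor
    · intro hM
      refine ⟨fbl_A_psd hM, ?_, fun X hX => fbl_schur hA hM hX⟩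
      exact fbl_exists hA (fun v hv => fbl_ker (fbl_C_psd hM) hM v hv)
    · rintro ⟨hApsd, ⟨X, hX⟩, hSchur⟩
      have hD := hSchur X hX
      have hdiag := fbl_blockdiag hApsd hD
      have h := hdiag.conjTranspose_mul_mul_same (Matrix.fromBlocks (1 : Matrix (Fin n) (Fin n) ℂ) X (0 : Matrix (Fin m) (Fin n) ℂ) 1)
      have hXA : Xᴴ * A = Bᴴ := by rw [← hX, conjTranspose_mul, hA.eq]
      have e : (Matrix.fromBlocks (1 : Matrix (Fin n) (Fin n) ℂ) X (0 : Matrix (Fin m) (Fin n) ℂ) 1)ᴴ *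
          Matrix.fromBlocks A 0 0 (C - Xᴴ * A * X) *
          Matrix.fromBlocks (1 : Matrix (Fin n) (Fin n) ℂ) X (0 : Matrix (Fin m) (Fin n) ℂ) 1 =
          Matrix.fromBlocks A B Bᴴ C := by
        rw [fromBlocks_conjTranspose, fromBlocks_multiply, fromBlocks_multiply]
        simp only [conjTranspose_one, conjTranspose_zero, Matrix.one_mul, Matrix.mul_one,
          Matrix.mul_zero, Matrix.zero_mul, add_zero, zero_add]
        rw [hXA, hX]
        rw [add_comm (Bᴴ * X), sub_add_cancel]
      rwa [e] at h
  · exact fun X Y hX hY => fbl_indep hA hX hY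
end
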